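/- For the concrete 11-dimensional constant-rate multi-mode system H with 12 modes and safety set S described below, the target point x_t (the point with w3 = 1 and all other coordinates 0) is NOT S-safe reachable from the start point x_s (the point with s0 = 1 and all other coordinates 0): no finite schedule with an S-safe run steers H from x_s to x_t. -/

import Mathlib

/-- The 11 coordinates of the concrete multi-mode system. -/
inductive V11 | s0 | c1 | c2 | w01 | w12 | z2 | w3 | x01 | x12 | x23 | x20
deriving DecidableEq

/-- The 12 modes of the concrete multi-mode system. -/
inductive M11 | I | M0 | M1 | M2a | M2b | M01 | M12 | M20 | M23 | M3 | M3c1 | M3c2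
deriving DecidableEq

/-- The rate vectors of the concrete system (unmentioned coordinates have rate 0). -/
def rate11 : M11 → V11 → ℝ
  | .I, .s0 => -1
  | .I, .w01 => 1
  | .M0, .w01 => -1
  | .M0, .x01 => 1
  | .M0, .c1 => 1
  | .M1, .w12 => -1
  | .M1, .x12 => 1
  | .M1, .c1 => -1
  | .M2a, .z2 => -1
  | .M2a, .x23 => 1
  | .M2b, .z2 => -1
  | .M2b, .x20 => 1
  | .M01, .x01 => -1
  | .M01, .w12 => 1
  | .M12, .x12 => -1
  | .M12, .z2 => 1
  | .M20, .x20 => -1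
  | .M20, .w01 => 1
  | .M23, .x23 => -1
  | .M23, .w3 => 1
  | .M3, .w3 => -1
  | .M3c1, .c1 => -1
  | .M3c1, .w3 => 1
  | .M3c2, .c2 => -1
  | .M3c2, .w3 => 1
  | _, _ => 0

/-- The safety set `S`: conjunction of conditions (1)–(7). -/
def S11 : Set (V11 → ℝ) :=
  { p |
    -- (1)
    (0 ≤ p .s0 ∧ p .s0 ≤ 1) ∧ (0 ≤ p .w01 ∧ p .w01 ≤ 1) ∧ (0 ≤ p .w12 ∧ p .w12 ≤ 1) ∧
    (0 ≤ p .z2 ∧ p .z2 ≤ 1) ∧ (0 ≤ p .x01 ∧ p .x01 ≤ 1) ∧ (0 ≤ p .x12 ∧ p .x12 ≤ 1) ∧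
    (0 ≤ p .x23 ∧ p .x23 ≤ 1) ∧ (0 ≤ p .x20 ∧ p .x20 ≤ 1) ∧
    0 ≤ p .w3 ∧ 0 ≤ p .c1 ∧ 0 ≤ p .c2 ∧
    -- (2) at most one of x01, x12, x23, x20 is positive
    ¬(0 < p .x01 ∧ 0 < p .x12) ∧ ¬(0 < p .x01 ∧ 0 < p .x23) ∧ ¬(0 < p .x01 ∧ 0 < p .x20) ∧
    ¬(0 < p .x12 ∧ 0 < p .x23) ∧ ¬(0 < p .x12 ∧ 0 < p .x20) ∧ ¬(0 < p .x23 ∧ 0 < p .x20) ∧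
    -- (3)
    (0 < p .w01 → p .w12 = 0 ∧ p .z2 = 0) ∧
    (0 < p .w12 → p .w01 = 0 ∧ p .z2 = 0) ∧
    -- (4)
    (0 < p .z2 → p .w01 = 0 ∧ p .w12 = 0) ∧
    -- (5)
    (0 < p .s0 → p .x01 = 0 ∧ p .x12 = 0 ∧ p .x23 = 0 ∧ p .x20 = 0) ∧
    -- (6)
    (0 < p .w3 → p .s0 = 0 ∧ p .w01 = 0 ∧ p .w12 = 0 ∧ p .z2 = 0 ∧
      p .x01 = 0 ∧ p .x12 = 0 ∧ p .x20 = 0) ∧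
    -- (7)
    (0 < p .x23 → p .x23 + p .w3 = 1) }

/-- The start point: `s0 = 1`, all other coordinates `0`. -/
def xs11 : V11 → ℝ := fun v => if v = .s0 then 1 else 0

/-- The target point: `w3 = 1`, all other coordinates `0`. -/
def xt11 : V11 → ℝ := fun v => if v = .w3 then 1 else 0

/-- The terminal state of the run of a schedule (a list of timed actions) from a state. -/
def runEnd {M V : Type*} [AddCommGroup V] [Module ℝ V] (R : M → V) : V → List (M × ℝ) → V
  | x, [] => x
  | x, (m, t) :: σ => runEnd R (x + t • R m) σ

/-- A schedule is `S`-safe from `x` if every point visited during its run lies in `S`. -/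
def SafeSched {M V : Type*} [AddCommGroup V] [Module ℝ V] (R : M → V) (S : Set V) :
    V → List (M × ℝ) → Prop
  | _, [] => True
  | x, (m, t) :: σ =>
      (∀ τ ∈ Set.Icc (0 : ℝ) t, x + τ • R m ∈ S) ∧ SafeSched R S (x + t • R m) σ


/-- Token sum: the total amount of "control token" mass. -/
def T11 (p : V11 → ℝ) : ℝ :=
  p .s0 + p .w01 + p .w12 + p .z2 + p .x01 + p .x12 + p .x23 + p .x20

/-- The invariant maintained along every safe run from the start point. -/
def Inv11 (p : V11 → ℝ) : Prop :=
  p .c2 = 0 ∧ p .x23 = 0 ∧ p .w3 = 0 ∧ T11 p = 1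

lemma S11_unfold {p : V11 → ℝ} (h : p ∈ S11) :
    (0 ≤ p .s0 ∧ p .s0 ≤ 1) ∧ (0 ≤ p .w01 ∧ p .w01 ≤ 1) ∧ (0 ≤ p .w12 ∧ p .w12 ≤ 1) ∧
    (0 ≤ p .z2 ∧ p .z2 ≤ 1) ∧ (0 ≤ p .x01 ∧ p .x01 ≤ 1) ∧ (0 ≤ p .x12 ∧ p .x12 ≤ 1) ∧
    (0 ≤ p .x23 ∧ p .x23 ≤ 1) ∧ (0 ≤ p .x20 ∧ p .x20 ≤ 1) ∧
    0 ≤ p .w3 ∧ 0 ≤ p .c1 ∧ 0 ≤ p .c2 ∧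
    ¬(0 < p .x01 ∧ 0 < p .x12) ∧ ¬(0 < p .x01 ∧ 0 < p .x23) ∧ ¬(0 < p .x01 ∧ 0 < p .x20) ∧
    ¬(0 < p .x12 ∧ 0 < p .x23) ∧ ¬(0 < p .x12 ∧ 0 < p .x20) ∧ ¬(0 < p .x23 ∧ 0 < p .x20) ∧
    (0 < p .w01 → p .w12 = 0 ∧ p .z2 = 0) ∧
    (0 < p .w12 → p .w01 = 0 ∧ p .z2 = 0) ∧
    (0 < p .z2 → p .w01 = 0 ∧ p .w12 = 0) ∧
    (0 < p .s0 → p .x01 = 0 ∧ p .x12 = 0 ∧ p .x23 = 0 ∧ p .x20 = 0) ∧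
    (0 < p .w3 → p .s0 = 0 ∧ p .w01 = 0 ∧ p .w12 = 0 ∧ p .z2 = 0 ∧
      p .x01 = 0 ∧ p .x12 = 0 ∧ p .x20 = 0) ∧
    (0 < p .x23 → p .x23 + p .w3 = 1) := h

lemma inv_step (x : V11 → ℝ) (m : M11) (t : ℝ) (ht : 0 ≤ t)
    (hsafe : ∀ τ ∈ Set.Icc (0 : ℝ) t, x + τ • rate11 m ∈ S11)
    (hx : Inv11 x) : Inv11 (x + t • rate11 m) := by
  obtain ⟨hc2, hx23, hw3, hT⟩ := hx
  simp only [T11] at hT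
  have hmem : x + t • rate11 m ∈ S11 := hsafe t ⟨ht, le_refl t⟩
  cases m <;>
    simp only [Inv11, T11, Pi.add_apply, Pi.smul_apply, smul_eq_mul, rate11] at *
  case I => exact ⟨by linarith, by linarith, by linarith, by linarith⟩
  case M0 => exact ⟨by linarith, by linarith, by linarith, by linarith⟩
  case M1 => exact ⟨by linarith, by linarith, by linarith, by linarith⟩
  case M2b => exact ⟨by linarith, by linarith, by linarith, by linarith⟩
  case M01 => exact ⟨by linarith, by linarith, by linarith, by linarith⟩
  case M12 => exact ⟨by linarith, by linarith, by linarith, by linarith⟩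
  case M20 => exact ⟨by linarith, by linarith, by linarith, by linarith⟩
  case M2a =>
    -- show t = 0
    have ht0 : t = 0 := by
      by_contra h0
      have htpos : 0 < t := lt_of_le_of_ne ht (Ne.symm h0)
      have h7 := (S11_unfold hmem).2.2.2.2.2.2.2.2.2.2.2.2.2.2.2.2.2.2.2.2.2.2
      simp only [Pi.add_apply, Pi.smul_apply, smul_eq_mul, rate11] at h7
      have ht1 : t = 1 := by
        have := h7 (by rw [hx23]; linarith)
        rw [hx23, hw3] at this; linarith
      have h2 := hsafe (1/2) ⟨by norm_num, by rw [ht1]; norm_num⟩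
      have h7' := (S11_unfold h2).2.2.2.2.2.2.2.2.2.2.2.2.2.2.2.2.2.2.2.2.2.2
      simp only [Pi.add_apply, Pi.smul_apply, smul_eq_mul, rate11] at h7'
      have := h7' (by rw [hx23]; norm_num)
      rw [hx23, hw3] at this; norm_num at this
    subst ht0
    refine ⟨by simpa using hc2, by simpa using hx23, by simpa using hw3, by linarith⟩
  case M23 =>
    have hge := ((S11_unfold hmem).2.2.2.2.2.2.1).1
    simp only [Pi.add_apply, Pi.smul_apply, smul_eq_mul, rate11, hx23] at hge
    have ht0 : t = 0 := by linarith
    subst ht0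
    refine ⟨by simpa using hc2, by simpa using hx23, by simpa using hw3, by linarith⟩
  case M3 =>
    have hge := (S11_unfold hmem).2.2.2.2.2.2.2.2.1
    simp only [Pi.add_apply, Pi.smul_apply, smul_eq_mul, rate11, hw3] at hge
    have ht0 : t = 0 := by linarith
    subst ht0
    refine ⟨by simpa using hc2, by simpa using hx23, by simpa using hw3, by linarith⟩
  case M3c1 =>
    have ht0 : t = 0 := by
      by_contra h0
      have htpos : 0 < t := lt_of_le_of_ne ht (Ne.symm h0)
      have h6 := (S11_unfold hmem).2.2.2.2.2.2.2.2.2.2.2.2.2.2.2.2.2.2.2.2.2.1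
      simp only [Pi.add_apply, Pi.smul_apply, smul_eq_mul, rate11] at h6
      have hh := h6 (by rw [hw3]; linarith)
      obtain ⟨h1, h2, h3, h4, h5, h6', h7⟩ := hh
      simp only [mul_zero, add_zero] at h1 h2 h3 h4 h5 h6' h7
      rw [h1, h2, h3, h4, h5, h6', h7, hx23] at hT
      norm_num at hT
    subst ht0
    refine ⟨by simpa using hc2, by simpa using hx23, by simpa using hw3, by linarith⟩
  case M3c2 =>
    have hge := (S11_unfold hmem).2.2.2.2.2.2.2.2.2.2.1
    simp only [Pi.add_apply, Pi.smul_apply, smul_eq_mul, rate11, hc2] at hge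
    have ht0 : t = 0 := by linarith
    subst ht0
    refine ⟨by simpa using hc2, by simpa using hx23, by simpa using hw3, by linarith⟩

lemma inv_run : ∀ (σ : List (M11 × ℝ)) (x : V11 → ℝ), (∀ q ∈ σ, 0 ≤ q.2) →
    SafeSched rate11 S11 x σ → Inv11 x → Inv11 (runEnd rate11 x σ)
  | [], x, _, _, hx => hx
  | (m, t) :: σ, x, hpos, hsafe, hx => by
      have h1 := inv_step x m t (hpos (m, t) List.mem_cons_self) hsafe.1 hx
      exact inv_run σ _ (fun q hq => hpos q (List.mem_cons_of_mem _ hq)) hsafe.2 h1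

/-- The target point `x_t` is not `S`-safe reachable from `x_s` in the concrete
11-dimensional multi-mode system: no finite schedule with an `S`-safe run steers
the system from `x_s` to `x_t`. -/
theorem stmt11 :
    ¬ ∃ σ : List (M11 × ℝ), (∀ q ∈ σ, 0 ≤ q.2) ∧
      SafeSched rate11 S11 xs11 σ ∧ runEnd rate11 xs11 σ = xt11 := by
  rintro ⟨σ, hpos, hsafe, hend⟩
  have hinv : Inv11 xs11 := by
    refine ⟨by simp [xs11], by simp [xs11], by simp [xs11], by simp [T11, xs11]⟩
  have := inv_run σ xs11 hpos hsafe hinv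
  rw [hend] at this
  have hw3 := this.2.2.1
  simp [xt11] at hw3
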